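/- Let (I, 𝓘, ι) be a σ-finite measure space with ι ≠ 0, and let η : I → [0,∞), ζ : I → (0,∞) and ξ : I → ℝ be 𝓘-measurable functions such that ∫_I ζ_i ι(di) < ∞ and such that O(y) := ∫_I 1_{{η_i < y}} ζ_i y^{ξ_i} ι(di) < ∞ for every y > 0. Then lim_{y→∞} (ln O(y)) / (ln y) = ι-ess sup ξ, where the limit and the essential supremum are taken in the extended real line. -/

import Mathlib

open MeasureTheory Filter Set

/-- Let (I, 𝓘, ι) be a σ-finite measure space with ι ≠ 0, and let
η : I → [0,∞), ζ : I → (0,∞) and ξ : I → ℝ be measurable with ∫ ζ dι < ∞ and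
O(y) := ∫ 1_{η_i < y} ζ_i y^{ξ_i} ι(di) < ∞ for every y > 0.  Then
lim_{y→∞} ln O(y) / ln y = ι-ess sup ξ in the extended real line. -/
theorem statement0 {I : Type*} [MeasurableSpace I] (ι : Measure I) [SigmaFinite ι]
    (hι : ι ≠ 0)
    (η ζ ξ : I → ℝ) (hηm : Measurable η) (hζm : Measurable ζ) (hξm : Measurable ξ)
    (hη0 : ∀ i, 0 ≤ η i) (hζ0 : ∀ i, 0 < ζ i)
    (hζint : Integrable ζ ι)
    (O : ℝ → ℝ)
    (hO : ∀ y > (0:ℝ), O y =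
      ∫ i, Set.indicator {i | η i < y} (fun i => ζ i * y ^ ξ i) i ∂ι)
    (hOint : ∀ y > (0:ℝ),
      Integrable (Set.indicator {i | η i < y} (fun i => ζ i * y ^ ξ i)) ι) :
    Tendsto (fun y : ℝ => ((Real.log (O y) / Real.log y : ℝ) : EReal)) atTop
      (nhds (essSup (fun i => (ξ i : EReal)) ι)) := by
  set M := essSup (fun i => (ξ i : EReal)) ι with hM
  set C : ℝ := ∫ i, ζ i ∂ι with hCdef
  have hC : 0 < C := by
    rw [hCdef, integral_pos_iff_support_of_nonneg_ae
      (Eventually.of_forall fun i => (hζ0 i).le) hζint]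
    have hsupp : Function.support ζ = Set.univ := by
      ext i; simp [Function.mem_support, (hζ0 i).ne']
    rw [hsupp]
    exact Measure.measure_univ_pos.2 hι
  -- key lower bound
  have key : ∀ b : ℝ, ι {i | b < ξ i} ≠ 0 →
      ∃ c > (0:ℝ), ∀ᶠ y in atTop, c * y ^ b ≤ O y := by
    intro b hb
    have hU : {i | b < ξ i} = ⋃ n : ℕ, ({i | b < ξ i} ∩ {i | η i < (n:ℝ)}) := by
      ext i
      simp only [Set.mem_iUnion, Set.mem_inter_iff, Set.mem_setOf_eq]
      constructor
      · intro h
        obtain ⟨n, hn⟩ := exists_nat_gt (η i)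
        exact ⟨n, h, hn⟩
      · rintro ⟨n, h, -⟩; exact h
    obtain ⟨n, hn⟩ : ∃ n : ℕ, ι ({i | b < ξ i} ∩ {i | η i < (n:ℝ)}) ≠ 0 := by
      by_contra h
      push_neg at h
      exact hb (by rw [hU]; exact measure_iUnion_null h)
    set B := {i | b < ξ i} ∩ {i | η i < (n:ℝ)} with hBdef
    have hBmeas : MeasurableSet B :=
      (measurableSet_lt measurable_const hξm).inter (measurableSet_lt hηm measurable_const)
    set c : ℝ := ∫ i in B, ζ i ∂ι with hcdef
    have hc : 0 < c := by
      rw [hcdef, setIntegral_pos_iff_support_of_nonneg_ae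
        (Eventually.of_forall fun i => (hζ0 i).le) hζint.integrableOn]
      have hsupp : Function.support ζ ∩ B = B := by
        ext i; simp [Function.mem_support, (hζ0 i).ne']
      rw [hsupp]
      exact lt_of_le_of_ne zero_le (Ne.symm hn)
    refine ⟨c, hc, ?_⟩
    filter_upwards [eventually_ge_atTop (max (n:ℝ) 1), eventually_gt_atTop 0] with y hy hy0
    have hy1 : (1:ℝ) ≤ y := le_trans (le_max_right _ _) hy
    have hyn : (n:ℝ) ≤ y := le_trans (le_max_left _ _) hy
    rw [hO y hy0]
    have hle : ∀ i, Set.indicator B (fun i => ζ i * y ^ b) i ≤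
        Set.indicator {i | η i < y} (fun i => ζ i * y ^ ξ i) i := by
      intro i
      by_cases hiB : i ∈ B
      · have hiη : i ∈ {i | η i < y} := lt_of_lt_of_le hiB.2 hyn
        rw [Set.indicator_of_mem hiB, Set.indicator_of_mem hiη]
        exact mul_le_mul_of_nonneg_left
          (Real.rpow_le_rpow_of_exponent_le hy1 hiB.1.le) (hζ0 i).le
      · rw [Set.indicator_of_notMem hiB]
        exact Set.indicator_nonneg
          (fun i _ => mul_nonneg (hζ0 i).le (Real.rpow_pos_of_pos hy0 _).le) i
    calc c * y ^ b = ∫ i, Set.indicator B (fun i => ζ i * y ^ b) i ∂ι := by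
          rw [integral_indicator hBmeas, integral_mul_const, mul_comm]
      _ ≤ _ := integral_mono ((hζint.mul_const _).indicator hBmeas) (hOint y hy0) hle
  -- O is eventually positive
  obtain ⟨b₀, hb₀⟩ : ∃ b : ℝ, ι {i | b < ξ i} ≠ 0 := by
    by_contra h
    push_neg at h
    apply hι
    have hU : (Set.univ : Set I) = ⋃ n : ℕ, {i | -(n:ℝ) < ξ i} := by
      ext i
      simp only [Set.mem_univ, true_iff, Set.mem_iUnion, Set.mem_setOf_eq]
      obtain ⟨n, hn⟩ := exists_nat_gt (-(ξ i))
      exact ⟨n, by linarith⟩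
    have h0 : ι Set.univ = 0 := by rw [hU]; exact measure_iUnion_null fun n => h _
    exact Measure.measure_univ_eq_zero.1 h0
  obtain ⟨c₀, hc₀, hOlb⟩ := key b₀ hb₀
  have hOpos : ∀ᶠ y in atTop, 0 < O y := by
    filter_upwards [hOlb, eventually_gt_atTop 0] with y h1 h2
    exact lt_of_lt_of_le (mul_pos hc₀ (Real.rpow_pos_of_pos h2 _)) h1
  -- limsup ≤ M
  have hlimsup : limsup (fun y : ℝ => ((Real.log (O y) / Real.log y : ℝ) : EReal)) atTop ≤ M := by
    rw [← EReal.le_of_forall_lt_iff_le]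
    intro a ha
    have hae : ∀ᵐ i ∂ι, ξ i ≤ a := by
      filter_upwards [ae_lt_of_essSup_lt ha] with i hi
      exact_mod_cast hi.le
    have hub : ∀ᶠ y in atTop,
        Real.log (O y) / Real.log y ≤ a + Real.log C / Real.log y := by
      filter_upwards [hOpos, eventually_ge_atTop (2:ℝ)] with y hOy hy2
      have hy0 : (0:ℝ) < y := by linarith
      have hy1 : (1:ℝ) < y := by linarith
      have hly : 0 < Real.log y := Real.log_pos hy1
      have hOub : O y ≤ C * y ^ a := by
        rw [hO y hy0]
        have haeb : ∀ᵐ i ∂ι, Set.indicator {i | η i < y}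
            (fun i => ζ i * y ^ ξ i) i ≤ ζ i * y ^ a := by
          filter_upwards [hae] with i hi
          by_cases hiη : i ∈ {i | η i < y}
          · rw [Set.indicator_of_mem hiη]
            exact mul_le_mul_of_nonneg_left
              (Real.rpow_le_rpow_of_exponent_le hy1.le hi) (hζ0 i).le
          · rw [Set.indicator_of_notMem hiη]
            exact mul_nonneg (hζ0 i).le (Real.rpow_pos_of_pos hy0 _).le
        calc ∫ i, Set.indicator {i | η i < y} (fun i => ζ i * y ^ ξ i) i ∂ι
            ≤ ∫ i, ζ i * y ^ a ∂ι :=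
              integral_mono_ae (hOint y hy0) (hζint.mul_const _) haeb
          _ = C * y ^ a := by rw [integral_mul_const]
      have hlog : Real.log (O y) ≤ Real.log C + a * Real.log y := by
        calc Real.log (O y) ≤ Real.log (C * y ^ a) := Real.log_le_log hOy hOub
          _ = Real.log C + a * Real.log y := by
              rw [Real.log_mul hC.ne' (Real.rpow_pos_of_pos hy0 _).ne', Real.log_rpow hy0]
      calc Real.log (O y) / Real.log y
          ≤ (Real.log C + a * Real.log y) / Real.log y := by
            exact div_le_div_of_nonneg_right hlog hly.le
        _ = a + Real.log C / Real.log y := by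
            rw [add_div, mul_div_cancel_right₀ _ hly.ne']; ring
    have hg : Tendsto (fun y : ℝ => ((a + Real.log C / Real.log y : ℝ) : EReal)) atTop
        (nhds (a : EReal)) := by
      rw [EReal.tendsto_coe]
      have h0 : Tendsto (fun y : ℝ => Real.log C / Real.log y) atTop (nhds 0) :=
        Tendsto.div_atTop tendsto_const_nhds Real.tendsto_log_atTop
      simpa using tendsto_const_nhds.add h0
    calc limsup (fun y : ℝ => ((Real.log (O y) / Real.log y : ℝ) : EReal)) atTop
        ≤ limsup (fun y : ℝ => ((a + Real.log C / Real.log y : ℝ) : EReal)) atTop :=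
          limsup_le_limsup (by
            filter_upwards [hub] with y h
            exact EReal.coe_le_coe_iff.2 h)
      _ = (a : EReal) := hg.limsup_eq
  -- M ≤ liminf
  have hliminf : M ≤ liminf (fun y : ℝ => ((Real.log (O y) / Real.log y : ℝ) : EReal)) atTop := by
    rw [← EReal.ge_of_forall_gt_iff_ge]
    intro b hb
    have hbne : ι {i | b < ξ i} ≠ 0 := by
      intro h0
      have haeb : ∀ᵐ i ∂ι, (ξ i : EReal) ≤ (b : EReal) := by
        have : ∀ᵐ i ∂ι, ξ i ≤ b := by
          rw [ae_iff]
          convert h0 using 2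
          ext i; simp
        filter_upwards [this] with i hi
        exact_mod_cast hi
      have := essSup_le_of_ae_le (b : EReal) haeb
      exact absurd (lt_of_lt_of_le hb this) (lt_irrefl _)
    obtain ⟨c, hc, hlb⟩ := key b hbne
    have hlbq : ∀ᶠ y in atTop,
        b + Real.log c / Real.log y ≤ Real.log (O y) / Real.log y := by
      filter_upwards [hlb, eventually_ge_atTop (2:ℝ)] with y h1 hy2
      have hy0 : (0:ℝ) < y := by linarith
      have hy1 : (1:ℝ) < y := by linarith
      have hly : 0 < Real.log y := Real.log_pos hy1
      have hpos : 0 < c * y ^ b := mul_pos hc (Real.rpow_pos_of_pos hy0 _)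
      have hlog : Real.log c + b * Real.log y ≤ Real.log (O y) := by
        calc Real.log c + b * Real.log y = Real.log (c * y ^ b) := by
              rw [Real.log_mul hc.ne' (Real.rpow_pos_of_pos hy0 _).ne', Real.log_rpow hy0]
          _ ≤ Real.log (O y) := Real.log_le_log hpos h1
      calc b + Real.log c / Real.log y
          = (Real.log c + b * Real.log y) / Real.log y := by
            rw [add_div, mul_div_cancel_right₀ _ hly.ne']; ring
        _ ≤ Real.log (O y) / Real.log y := div_le_div_of_nonneg_right hlog hly.le
    have hg : Tendsto (fun y : ℝ => ((b + Real.log c / Real.log y : ℝ) : EReal)) atTop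
        (nhds (b : EReal)) := by
      rw [EReal.tendsto_coe]
      have h0 : Tendsto (fun y : ℝ => Real.log c / Real.log y) atTop (nhds 0) :=
        Tendsto.div_atTop tendsto_const_nhds Real.tendsto_log_atTop
      simpa using tendsto_const_nhds.add h0
    calc (b : EReal)
        = liminf (fun y : ℝ => ((b + Real.log c / Real.log y : ℝ) : EReal)) atTop :=
          hg.liminf_eq.symm
      _ ≤ liminf (fun y : ℝ => ((Real.log (O y) / Real.log y : ℝ) : EReal)) atTop :=
          liminf_le_liminf (by
            filter_upwards [hlbq] with y h
            exact EReal.coe_le_coe_iff.2 h)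
  exact tendsto_of_le_liminf_of_limsup_le hliminf hlimsup
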